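/- Let Λ be a nonempty finite set, A a Hermitian complex matrix indexed by Λ×Λ, and μ a Borel probability measure on ℝ with compact support. For ω ∈ ℝ^Λ, let H_ω = A + diag(ω), where diag(ω) is the diagonal matrix with entries ω_k. Then for every E ∈ ℝ and every ε > 0, ∫_{ℝ^Λ} #{i : λ_i(H_ω) ∈ [E−ε, E+ε]} dℙ(ω) ≤ |Λ| · s(μ, 4ε), where ℙ = ⊗_{k ∈ Λ} μ is the product measure (i.i.d. coupling constants). -/

import Mathlib

open MeasureTheory Matrix
open scoped Classical ENNReal

set_option linter.unusedSectionVars false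
set_option maxHeartbeats 1000000
set_option synthInstance.maxHeartbeats 400000
open Matrix Finset
namespace WegnerAux
variable {n : Type*} [Fintype n] [DecidableEq n] {A : Matrix n n ℂ}

noncomputable def qf (A : Matrix n n ℂ) (v : n → ℂ) : ℝ := (star v ⬝ᵥ (A *ᵥ v)).re
noncomputable def ns (v : n → ℂ) : ℝ := ∑ i, Complex.normSq (v i)

noncomputable def u (hA : A.IsHermitian) (i : n) : n → ℂ :=
  (WithLp.equiv 2 (n → ℂ)) (hA.eigenvectorBasis i)

lemma mulVec_u (hA : A.IsHermitian) (i : n) :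
    A *ᵥ u hA i = hA.eigenvalues i • u hA i := hA.mulVec_eigenvectorBasis i

lemma dot_u (hA : A.IsHermitian) (i j : n) :
    star (u hA i) ⬝ᵥ u hA j = if i = j then 1 else 0 := by
  have h := orthonormal_iff_ite.mp hA.eigenvectorBasis.orthonormal i j
  rw [EuclideanSpace.inner_eq_star_dotProduct, dotProduct_comm] at h
  exact h

lemma dot_sum_left (s : Finset n) (v : n → n → ℂ) (w : n → ℂ) :
    (∑ i ∈ s, v i) ⬝ᵥ w = ∑ i ∈ s, v i ⬝ᵥ w := by
  simp only [dotProduct, Finset.sum_apply, Finset.sum_mul]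
  exact Finset.sum_comm

lemma dot_sum_right (s : Finset n) (w : n → ℂ) (v : n → n → ℂ) :
    w ⬝ᵥ (∑ i ∈ s, v i) = ∑ i ∈ s, w ⬝ᵥ v i := by
  simp only [dotProduct, Finset.sum_apply, Finset.mul_sum]
  exact Finset.sum_comm

lemma dot_expand (hA : A.IsHermitian) (c d : n → ℂ) :
    star (∑ i, c i • u hA i) ⬝ᵥ (∑ j, d j • u hA j)
      = ∑ i, (starRingEnd ℂ) (c i) * d i := by
  rw [star_sum, dot_sum_left]
  congr 1
  funext i
  rw [dot_sum_right]
  have : ∀ j, star (c i • u hA i) ⬝ᵥ (d j • u hA j)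
      = ((starRingEnd ℂ) (c i) * d j) * (star (u hA i) ⬝ᵥ u hA j) := by
    intro j
    rw [star_smul, smul_dotProduct, dotProduct_smul]
    simp [mul_assoc]
  simp only [this, dot_u]
  simp [Finset.sum_ite_eq]

lemma ns_eq (v : n → ℂ) : ns v = (star v ⬝ᵥ v).re := by
  simp only [ns, dotProduct, Pi.star_apply, Complex.star_def, Complex.re_sum]
  congr 1
  funext i
  rw [mul_comm, Complex.mul_conj, Complex.ofReal_re]

lemma ns_combo (hA : A.IsHermitian) (c : n → ℂ) :
    ns (∑ i, c i • u hA i) = ∑ i, Complex.normSq (c i) := by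
  rw [ns_eq, dot_expand hA c c, Complex.re_sum]
  congr 1
  funext i
  rw [mul_comm, Complex.mul_conj, Complex.ofReal_re]

lemma mulVec_sum (s : Finset n) (v : n → n → ℂ) :
    A *ᵥ (∑ i ∈ s, v i) = ∑ i ∈ s, A *ᵥ v i :=
  map_sum A.mulVecLin v s

lemma mulVec_combo (hA : A.IsHermitian) (c : n → ℂ) :
    A *ᵥ (∑ i, c i • u hA i) = ∑ i, ((hA.eigenvalues i : ℂ) * c i) • u hA i := by
  rw [mulVec_sum]
  congr 1
  funext i
  show A *ᵥ (c i • u hA i) = _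
  rw [mulVec_smul, mulVec_u]
  ext j
  simp [Complex.real_smul]
  ring

lemma qf_combo (hA : A.IsHermitian) (c : n → ℂ) :
    qf A (∑ i, c i • u hA i) = ∑ i, hA.eigenvalues i * Complex.normSq (c i) := by
  rw [qf, mulVec_combo hA c, dot_expand hA c]
  rw [Complex.re_sum]
  congr 1
  funext i
  have : (starRingEnd ℂ) (c i) * ((hA.eigenvalues i : ℂ) * c i)
      = (hA.eigenvalues i : ℂ) * (Complex.normSq (c i) : ℂ) := by
    rw [Complex.normSq_eq_conj_mul_self]; ring
  rw [this]
  simp [← Complex.ofReal_mul]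

noncomputable def eigCnt {A : Matrix n n ℂ} (hA : A.IsHermitian) (x : ℝ) : ℕ :=
  (Finset.univ.filter fun i => hA.eigenvalues i ≤ x).card

def Good (A : Matrix n n ℂ) (x : ℝ) (V : Submodule ℂ (n → ℂ)) : Prop :=
  ∀ v ∈ V, qf A v ≤ x * ns v

noncomputable def b' (hA : A.IsHermitian) : Module.Basis n ℂ (n → ℂ) :=
  (hA.eigenvectorBasis.toBasis).map (WithLp.linearEquiv 2 ℂ (n → ℂ))

lemma b'_eq (hA : A.IsHermitian) (i : n) : b' hA i = u hA i := by
  simp [b', u]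

lemma repr_combo (hA : A.IsHermitian) (v : n → ℂ) :
    v = ∑ i, (b' hA).repr v i • u hA i := by
  conv_lhs => rw [← (b' hA).sum_repr v]
  simp [b'_eq]

lemma finrank_span_basis_image (hA : A.IsHermitian) (s : Finset n) :
    Module.finrank ℂ (Submodule.span ℂ ((b' hA) '' ↑s)) = s.card := by
  have h1 : LinearIndependent ℂ (fun i : {x // x ∈ s} => b' hA i) :=
    (b' hA).linearIndependent.comp _ Subtype.val_injective
  have h2 := finrank_span_eq_card h1
  rw [Fintype.card_coe] at h2
  rw [Set.image_eq_range]
  exact h2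

lemma finrank_le_eigCnt {x : ℝ} (hA : A.IsHermitian) (V : Submodule ℂ (n → ℂ))
    (hV : Good A x V) : Module.finrank ℂ V ≤ eigCnt hA x := by
  by_contra hcon
  push_neg at hcon
  set s : Finset n := Finset.univ.filter fun i => hA.eigenvalues i ≤ x with hs
  set sc : Finset n := Finset.univ.filter fun i => ¬ hA.eigenvalues i ≤ x with hsc
  set W : Submodule ℂ (n → ℂ) := Submodule.span ℂ ((b' hA) '' ↑sc) with hW
  have hWrank : Module.finrank ℂ W = sc.card := finrank_span_basis_image hA sc
  have hcards : s.card + sc.card = Fintype.card n := by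
    rw [hs, hsc]
    simpa using Finset.card_filter_add_card_filter_not
      (s := Finset.univ) (p := fun i => hA.eigenvalues i ≤ x)
  have htop : Module.finrank ℂ (V ⊔ W : Submodule ℂ (n → ℂ)) ≤ Fintype.card n := by
    have := Submodule.finrank_le (V ⊔ W : Submodule ℂ (n → ℂ))
    simpa [Module.finrank_pi] using this
  have hsum := Submodule.finrank_sup_add_finrank_inf_eq V W
  have hcnt : eigCnt hA x = s.card := rfl
  have hpos : 0 < Module.finrank ℂ (V ⊓ W : Submodule ℂ (n → ℂ)) := by
    omega
  haveI := Module.finrank_pos_iff.mp hpos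
  obtain ⟨⟨v, hvVW⟩, hvne⟩ := exists_ne (0 : (V ⊓ W : Submodule ℂ (n → ℂ)))
  have hvne' : v ≠ 0 := by
    intro h
    apply hvne
    ext
    simp [h]
  have hvV : v ∈ V := hvVW.1
  have hvW : v ∈ W := hvVW.2
  -- expand v in the basis
  set c : n → ℂ := fun i => (b' hA).repr v i with hc
  have hsupp : ∀ i, c i ≠ 0 → i ∈ sc := by
    intro i hi
    have := (Module.Basis.mem_span_image (b' hA)).mp hvW
    exact this (by simpa [hc] using hi)
  have hvrepr : v = ∑ i, c i • u hA i := repr_combo hA v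
  have hqf : qf A v = ∑ i, hA.eigenvalues i * Complex.normSq (c i) := by
    rw [hvrepr]; exact qf_combo hA c
  have hns : ns v = ∑ i, Complex.normSq (c i) := by
    rw [hvrepr]; exact ns_combo hA c
  have hstrict : ∀ i, c i ≠ 0 → x * Complex.normSq (c i) < hA.eigenvalues i * Complex.normSq (c i) := by
    intro i h0
    have hi := hsupp i h0
    have hx : x < hA.eigenvalues i := by
      have := (Finset.mem_filter.mp hi).2
      exact lt_of_not_ge this
    have hpos' : 0 < Complex.normSq (c i) := Complex.normSq_pos.mpr h0
    exact (mul_lt_mul_of_pos_right hx hpos')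
  have hterm : ∀ i, x * Complex.normSq (c i) ≤ hA.eigenvalues i * Complex.normSq (c i) := by
    intro i
    by_cases h0 : c i = 0
    · simp [h0]
    · exact le_of_lt (hstrict i h0)
  have hex : ∃ i, c i ≠ 0 := by
    by_contra hall
    push_neg at hall
    apply hvne'
    rw [hvrepr]
    simp [hall]
  obtain ⟨i0, hi0⟩ := hex
  have hgt : x * ns v < qf A v := by
    rw [hqf, hns, Finset.mul_sum]
    exact Finset.sum_lt_sum (fun i _ => hterm i) ⟨i0, Finset.mem_univ _, hstrict i0 hi0⟩
  exact absurd (hV v hvV) (not_le.mpr hgt)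


lemma exists_good (hA : A.IsHermitian) (x : ℝ) :
    ∃ V : Submodule ℂ (n → ℂ), Module.finrank ℂ V = eigCnt hA x ∧ Good A x V := by
  set s : Finset n := Finset.univ.filter fun i => hA.eigenvalues i ≤ x with hs
  refine ⟨Submodule.span ℂ ((b' hA) '' ↑s), finrank_span_basis_image hA s, ?_⟩
  intro v hv
  set c : n → ℂ := fun i => (b' hA).repr v i with hc
  have hsupp : ∀ i, c i ≠ 0 → i ∈ s := by
    intro i hi
    have := (Module.Basis.mem_span_image (b' hA)).mp hv
    exact this (by simpa [hc] using hi)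
  have hvrepr : v = ∑ i, c i • u hA i := repr_combo hA v
  have hqf : qf A v = ∑ i, hA.eigenvalues i * Complex.normSq (c i) := by
    rw [hvrepr]; exact qf_combo hA c
  have hns : ns v = ∑ i, Complex.normSq (c i) := by
    rw [hvrepr]; exact ns_combo hA c
  rw [hqf, hns, Finset.mul_sum]
  apply Finset.sum_le_sum
  intro i _
  by_cases h0 : c i = 0
  · simp [h0]
  · have hi := hsupp i h0
    have hx : hA.eigenvalues i ≤ x := (Finset.mem_filter.mp hi).2
    have hpos' : 0 ≤ Complex.normSq (c i) := Complex.normSq_nonneg _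
    exact mul_le_mul_of_nonneg_right hx hpos'

/-- The master comparison lemma. -/
lemma count_le_count {B : Matrix n n ℂ} (hA : A.IsHermitian) (hB : B.IsHermitian)
    {x y : ℝ} (h : ∀ v, qf B v - y * ns v ≤ qf A v - x * ns v) :
    eigCnt hA x ≤ eigCnt hB y := by
  obtain ⟨V, hrank, hgood⟩ := exists_good hA x
  rw [← hrank]
  apply finrank_le_eigCnt hB V
  intro v hv
  have := hgood v hv
  have h2 := h v
  linarith

lemma qf_add (A B : Matrix n n ℂ) (v : n → ℂ) : qf (A + B) v = qf A v + qf B v := by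
  simp [qf, add_mulVec, dotProduct_add]

lemma qf_diagonal (d : n → ℝ) (v : n → ℂ) :
    qf (diagonal (fun i => (d i : ℂ))) v = ∑ i, d i * Complex.normSq (v i) := by
  simp only [qf, dotProduct, Pi.star_apply, Complex.star_def, Complex.re_sum]
  congr 1
  funext i
  rw [mulVec_diagonal]
  have : (starRingEnd ℂ) (v i) * ((d i : ℂ) * v i) = (d i : ℂ) * (Complex.normSq (v i) : ℂ) := by
    rw [Complex.normSq_eq_conj_mul_self]; ring
  rw [this, ← Complex.ofReal_mul, Complex.ofReal_re]

lemma sum_ne_zero_at {M : Type*} [AddCommMonoid M] (k : n) (f : n → M) (hf : f k = 0) :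
    ∑ j, f j = ∑ j : {j : n // j ≠ k}, f ↑j := by
  have h1 : ∑ j ∈ Finset.univ.erase k, f j = ∑ j : {j : n // j ≠ k}, f ↑j := by
    rw [← Finset.sum_subtype (Finset.univ.erase k) (fun x => by simp) f]
  rw [← h1, ← Finset.add_sum_erase Finset.univ f (Finset.mem_univ k), hf, zero_add]

/-- extension by zero -/
def ext0 (k : n) : ({j : n // j ≠ k} → ℂ) →ₗ[ℂ] (n → ℂ) where
  toFun w := fun j => if h : j = k then 0 else w ⟨j, h⟩
  map_add' w₁ w₂ := by funext j; by_cases h : j = k <;> simp [h]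
  map_smul' c w := by funext j; by_cases h : j = k <;> simp [h]

lemma ext0_apply_ne (k : n) (w : {j : n // j ≠ k} → ℂ) (j : n) (h : j ≠ k) :
    ext0 k w j = w ⟨j, h⟩ := by simp [ext0, h]

lemma ext0_apply_self (k : n) (w : {j : n // j ≠ k} → ℂ) : ext0 k w k = 0 := by simp [ext0]

lemma ns_ext0 (k : n) (w : {j : n // j ≠ k} → ℂ) : ns (ext0 k w) = ns w := by
  rw [ns, sum_ne_zero_at k _ (by simp [ext0_apply_self])]
  congr 1
  funext j
  rw [ext0_apply_ne k w j j.2]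

lemma qf_ext0 (k : n) (A : Matrix n n ℂ) (w : {j : n // j ≠ k} → ℂ) :
    qf A (ext0 k w) = qf (A.submatrix Subtype.val Subtype.val) w := by
  have h1 : star (ext0 k w) ⬝ᵥ (A *ᵥ ext0 k w)
      = star w ⬝ᵥ ((A.submatrix Subtype.val Subtype.val) *ᵥ w) := by
    show (∑ j, (starRingEnd ℂ) (ext0 k w j) * (A *ᵥ ext0 k w) j) = _
    rw [sum_ne_zero_at k _ (by simp [ext0_apply_self])]
    show _ = ∑ j : {j : n // j ≠ k}, (starRingEnd ℂ) (w j) * _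
    congr 1
    funext j
    have hmv : (A *ᵥ ext0 k w) (j : n)
        = ((A.submatrix Subtype.val Subtype.val) *ᵥ w) j := by
      show (∑ l, A j l * ext0 k w l) = ∑ l : {l : n // l ≠ k}, A j l * w l
      rw [sum_ne_zero_at k _ (by simp [ext0_apply_self])]
      congr 1
      funext l
      rw [ext0_apply_ne k w l l.2]
    rw [hmv, ext0_apply_ne k w j j.2]
  rw [qf, qf, h1]

lemma eigCnt_minor_le (k : n) (hA : A.IsHermitian)
    (hA' : (A.submatrix (Subtype.val : {j : n // j ≠ k} → n) Subtype.val).IsHermitian)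
    (x : ℝ) : eigCnt hA' x ≤ eigCnt hA x := by
  obtain ⟨V', hrank, hgood⟩ := exists_good hA' x
  have hinj : Function.Injective (ext0 k) := by
    intro w₁ w₂ h
    funext j
    have := congrFun h (j : n)
    rwa [ext0_apply_ne k w₁ j j.2, ext0_apply_ne k w₂ j j.2] at this
  rw [← hrank]
  have hfr : Module.finrank ℂ (V'.map (ext0 k)) = Module.finrank ℂ V' :=
    (Submodule.equivMapOfInjective (ext0 k) hinj V').symm.finrank_eq
  rw [← hfr]
  apply finrank_le_eigCnt hA
  rintro v ⟨w, hw, rfl⟩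
  rw [qf_ext0, ns_ext0]
  exact hgood w hw

lemma eigCnt_le_minor_add_one (k : n) (hA : A.IsHermitian)
    (hA' : (A.submatrix (Subtype.val : {j : n // j ≠ k} → n) Subtype.val).IsHermitian)
    (x : ℝ) : eigCnt hA x ≤ eigCnt hA' x + 1 := by
  obtain ⟨V, hrank, hgood⟩ := exists_good hA x
  set f : V →ₗ[ℂ] ℂ := (LinearMap.proj k).comp V.subtype with hf
  set K : Submodule ℂ (n → ℂ) := (LinearMap.ker f).map V.subtype with hK
  have hKmem : ∀ v ∈ K, v ∈ V ∧ v k = 0 := by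
    rintro v ⟨⟨v', hv'⟩, hker, rfl⟩
    exact ⟨hv', by simpa [hf] using hker⟩
  have hKrank : Module.finrank ℂ V ≤ Module.finrank ℂ K + 1 := by
    have h1 : Module.finrank ℂ K = Module.finrank ℂ (LinearMap.ker f) :=
      (Submodule.equivMapOfInjective V.subtype (Submodule.injective_subtype V)
        (LinearMap.ker f)).symm.finrank_eq
    have h2 := LinearMap.finrank_range_add_finrank_ker f
    have h3 : Module.finrank ℂ (LinearMap.range f) ≤ 1 := by
      have := Submodule.finrank_le (LinearMap.range f)
      simpa using this
    omega
  set R : (n → ℂ) →ₗ[ℂ] ({j : n // j ≠ k} → ℂ) :=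
    LinearMap.funLeft ℂ ℂ Subtype.val with hR
  have hLR : ∀ v ∈ K, ext0 k (R v) = v := by
    intro v hv
    funext j
    by_cases h : j = k
    · rw [h, ext0_apply_self]
      exact ((hKmem v hv).2).symm
    · rw [ext0_apply_ne k _ j h]
      rfl
  set K' : Submodule ℂ ({j : n // j ≠ k} → ℂ) := K.map R with hK'
  have hKK' : K'.map (ext0 k) = K := by
    apply le_antisymm
    · rintro v ⟨w, ⟨v', hv', rfl⟩, rfl⟩
      rw [hLR v' hv']
      exact hv'
    · intro v hv
      exact ⟨R v, ⟨v, hv, rfl⟩, hLR v hv⟩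
  have hfr2 : Module.finrank ℂ K ≤ Module.finrank ℂ K' := by
    rw [← hKK']
    exact Submodule.finrank_map_le (ext0 k) K'
  have hgood' : Good (A.submatrix Subtype.val Subtype.val) x K' := by
    rintro w ⟨v, hv, rfl⟩
    rw [← qf_ext0, ← ns_ext0, hLR v hv]
    exact hgood v ((hKmem v hv).1)
  have := finrank_le_eigCnt hA' K' hgood'
  omega

section Anderson

variable (A)

/-- the Anderson Hamiltonian -/
def Hmat (ω : n → ℝ) : Matrix n n ℂ := A + diagonal (fun k => (ω k : ℂ))

variable {A}

lemma qf_Hmat (ω : n → ℝ) (v : n → ℂ) :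
    qf (Hmat A ω) v = qf A v + ∑ i, ω i * Complex.normSq (v i) := by
  rw [Hmat, qf_add, qf_diagonal]

lemma eigCnt_congr {B : Matrix n n ℂ} (hA : A.IsHermitian) (hB : B.IsHermitian)
    (h : A = B) (x : ℝ) : eigCnt hA x = eigCnt hB x := by
  subst h; rfl

/-- Monotonicity: raising the potential decreases the counting function. -/
lemma eigCnt_Hmat_anti (hH : ∀ ω : n → ℝ, (Hmat A ω).IsHermitian) {ω ω' : n → ℝ}
    (h : ∀ i, ω i ≤ ω' i) (x : ℝ) : eigCnt (hH ω') x ≤ eigCnt (hH ω) x := by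
  apply count_le_count
  intro v
  rw [qf_Hmat, qf_Hmat]
  have : ∑ i, ω i * Complex.normSq (v i) ≤ ∑ i, ω' i * Complex.normSq (v i) :=
    Finset.sum_le_sum fun i _ =>
      mul_le_mul_of_nonneg_right (h i) (Complex.normSq_nonneg _)
  linarith

/-- Shifting the potential by a constant shifts the counting function. -/
lemma eigCnt_Hmat_shift (hH : ∀ ω : n → ℝ, (Hmat A ω).IsHermitian) (ω : n → ℝ) (c x : ℝ) :
    eigCnt (hH (fun l => ω l + c)) x = eigCnt (hH ω) (x - c) := by
  have key : ∀ v : n → ℂ, qf (Hmat A (fun l => ω l + c)) v - x * ns v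
      = qf (Hmat A ω) v - (x - c) * ns v := by
    intro v
    rw [qf_Hmat, qf_Hmat]
    have : ∑ i, (ω i + c) * Complex.normSq (v i)
        = ∑ i, ω i * Complex.normSq (v i) + c * ns v := by
      rw [ns, Finset.mul_sum, ← Finset.sum_add_distrib]
      congr 1; funext i; ring
    rw [this]; ring
  apply le_antisymm
  · exact count_le_count _ _ (fun v => (key v).ge)
  · exact count_le_count _ _ (fun v => (key v).le)

/-- The principal minor of the Hamiltonian does not depend on the value at the removed site. -/
lemma Hmat_minor_eq (k : n) (y : n → ℝ) (t : ℝ) :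
    (Hmat A (Function.update y k t)).submatrix (Subtype.val : {j : n // j ≠ k} → n) Subtype.val
      = Hmat (A.submatrix (Subtype.val : {j : n // j ≠ k} → n) Subtype.val)
          (fun j : {j : n // j ≠ k} => y j.val) := by
  rw [Hmat, Hmat]
  ext i j
  by_cases h : (i : n) = (j : n)
  · have hij : i = j := Subtype.ext h
    subst hij
    simp [submatrix_apply, diagonal_apply_eq, Function.update_of_ne i.2]
  · have hij : i ≠ j := fun hc => h (congrArg Subtype.val hc)
    simp [submatrix_apply, diagonal_apply_ne _ h, diagonal_apply_ne _ hij]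

/-- the two-value property of the counting function, from Cauchy interlacing -/
lemma eigCnt_Hmat_twoval (hH : ∀ ω : n → ℝ, (Hmat A ω).IsHermitian) (k : n) (y : n → ℝ)
    (x : ℝ) (t t' : ℝ) :
    eigCnt (hH (Function.update y k t)) x ≤ eigCnt (hH (Function.update y k t')) x + 1 := by
  set Am := A.submatrix (Subtype.val : {j : n // j ≠ k} → n) Subtype.val with hAm
  have hmin : ∀ s : ℝ, ((Hmat A (Function.update y k s)).submatrix
      (Subtype.val : {j : n // j ≠ k} → n) Subtype.val).IsHermitian :=
    fun s => (hH _).submatrix _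
  have hmin' : (Hmat Am (fun j : {j : n // j ≠ k} => y j.val)).IsHermitian := by
    rw [← Hmat_minor_eq k y t]
    exact hmin t
  have h1 : eigCnt (hH (Function.update y k t)) x ≤ eigCnt (hmin t) x + 1 :=
    eigCnt_le_minor_add_one k _ _ x
  have h2 : eigCnt (hmin t') x ≤ eigCnt (hH (Function.update y k t')) x :=
    eigCnt_minor_le k _ _ x
  have h3 : eigCnt (hmin t) x = eigCnt (hmin' ) x :=
    eigCnt_congr _ _ (Hmat_minor_eq k y t) x
  have h4 : eigCnt (hmin t') x = eigCnt (hmin') x :=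
    eigCnt_congr _ _ (Hmat_minor_eq k y t') x
  omega

end Anderson

section Trace

/-- Conjugation by a unitary matrix, as an `ℝ`-algebra homomorphism. -/
noncomputable def conjA (U : Matrix.unitaryGroup n ℂ) : Matrix n n ℂ →ₐ[ℝ] Matrix n n ℂ where
  toFun X := ↑U * X * star (U : Matrix n n ℂ)
  map_one' := by
    show (U : Matrix n n ℂ) * 1 * star (U : Matrix n n ℂ) = 1
    rw [mul_one]
    exact (Matrix.mem_unitaryGroup_iff).mp U.2
  map_mul' X Y := by
    show (U : Matrix n n ℂ) * (X * Y) * star (U : Matrix n n ℂ)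
      = ((U : Matrix n n ℂ) * X * star (U : Matrix n n ℂ))
        * ((U : Matrix n n ℂ) * Y * star (U : Matrix n n ℂ))
    have h : star (U : Matrix n n ℂ) * (U : Matrix n n ℂ) = 1 := Unitary.coe_star_mul_self U
    calc (U : Matrix n n ℂ) * (X * Y) * star (U : Matrix n n ℂ)
        = (U : Matrix n n ℂ) * X * ((star (U : Matrix n n ℂ) * (U : Matrix n n ℂ))
            * (Y * star (U : Matrix n n ℂ))) := by
          rw [h, one_mul]; simp only [Matrix.mul_assoc]
      _ = ((U : Matrix n n ℂ) * X * star (U : Matrix n n ℂ))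
          * ((U : Matrix n n ℂ) * Y * star (U : Matrix n n ℂ)) := by
          simp only [Matrix.mul_assoc]
  map_zero' := by
    show (U : Matrix n n ℂ) * 0 * star (U : Matrix n n ℂ) = 0
    simp
  map_add' X Y := by
    show (U : Matrix n n ℂ) * (X + Y) * star (U : Matrix n n ℂ) = _
    rw [Matrix.mul_add, Matrix.add_mul]
  commutes' c := by
    show (U : Matrix n n ℂ) * algebraMap ℝ (Matrix n n ℂ) c * star (U : Matrix n n ℂ) = _
    simp only [Algebra.algebraMap_eq_smul_one]
    rw [Matrix.mul_smul, Matrix.mul_one, Matrix.smul_mul]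
    congr 1
    exact (Matrix.mem_unitaryGroup_iff).mp U.2

lemma trace_conjA (U : Matrix.unitaryGroup n ℂ) (X : Matrix n n ℂ) :
    (conjA U X).trace = X.trace := by
  show ((U : Matrix n n ℂ) * X * star (U : Matrix n n ℂ)).trace = X.trace
  rw [Matrix.trace_mul_cycle]
  rw [Unitary.coe_star_mul_self U, Matrix.one_mul]

/-- Trace of a polynomial applied to a Hermitian matrix. -/
lemma trace_aeval {M : Matrix n n ℂ} (hM : M.IsHermitian) (p : Polynomial ℝ) :
    (Polynomial.aeval M p).trace = ((∑ i, p.eval (hM.eigenvalues i) : ℝ) : ℂ) := by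
  have hspec : M = conjA hM.eigenvectorUnitary
      (diagonal (RCLike.ofReal ∘ hM.eigenvalues)) := hM.spectral_theorem
  conv_lhs => rw [hspec]
  rw [Polynomial.aeval_algHom_apply, trace_conjA]
  have hdiag : diagonal (RCLike.ofReal ∘ hM.eigenvalues)
      = Matrix.diagonalAlgHom (α := ℂ) ℝ (RCLike.ofReal ∘ hM.eigenvalues) := rfl
  rw [hdiag, Polynomial.aeval_algHom_apply]
  have hpt : (Polynomial.aeval (RCLike.ofReal ∘ hM.eigenvalues : n → ℂ) p)
      = fun i => ((p.eval (hM.eigenvalues i) : ℝ) : ℂ) := by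
    funext i
    have h1 : ((RCLike.ofReal ∘ hM.eigenvalues : n → ℂ)) i
        = Pi.evalAlgHom ℝ (fun _ : n => ℂ) i (RCLike.ofReal ∘ hM.eigenvalues : n → ℂ) := rfl
    have h2 := Polynomial.aeval_algHom_apply (Pi.evalAlgHom ℝ (fun _ : n => ℂ) i)
      (RCLike.ofReal ∘ hM.eigenvalues : n → ℂ) p
    have h3 : (Polynomial.aeval ((hM.eigenvalues i : ℝ) : ℂ)) p
        = ((p.eval (hM.eigenvalues i) : ℝ) : ℂ) := by
      have h4 := Polynomial.aeval_algebraMap_apply ℂ (hM.eigenvalues i) p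
      rw [show ((hM.eigenvalues i : ℝ) : ℂ) = algebraMap ℝ ℂ (hM.eigenvalues i) from rfl, h4,
          Polynomial.coe_aeval_eq_eval]; rfl
    have h5 : ((RCLike.ofReal ∘ hM.eigenvalues : n → ℂ)) i = ((hM.eigenvalues i : ℝ) : ℂ) := rfl
    calc (Polynomial.aeval (RCLike.ofReal ∘ hM.eigenvalues : n → ℂ) p) i
        = Pi.evalAlgHom ℝ (fun _ : n => ℂ) i (Polynomial.aeval
            (RCLike.ofReal ∘ hM.eigenvalues : n → ℂ) p) := rfl
      _ = Polynomial.aeval (((RCLike.ofReal ∘ hM.eigenvalues : n → ℂ)) i) p := h2.symm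
      _ = ((p.eval (hM.eigenvalues i) : ℝ) : ℂ) := by rw [h5]; exact h3
  show (diagonal (Polynomial.aeval
      (RCLike.ofReal ∘ hM.eigenvalues : n → ℂ) p : n → ℂ)).trace = _
  rw [hpt, Matrix.trace_diagonal, Complex.ofReal_sum]

end Trace

section Meas

lemma continuous_Hmat (A : Matrix n n ℂ) : Continuous fun ω : n → ℝ => Hmat A ω := by
  apply continuous_matrix
  intro i j
  by_cases h : i = j
  · subst h
    have : (fun ω : n → ℝ => Hmat A ω i i) = fun ω => A i i + (ω i : ℂ) := by
      funext ω; simp [Hmat, diagonal_apply_eq]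
    rw [this]
    exact continuous_const.add (Complex.continuous_ofReal.comp (continuous_apply i))
  · have : (fun ω : n → ℝ => Hmat A ω i j) = fun ω => A i j := by
      funext ω; simp [Hmat, diagonal_apply_ne _ h]
    rw [this]
    exact continuous_const

noncomputable def sumEig (hH : ∀ ω : n → ℝ, (Hmat A ω).IsHermitian) (f : ℝ → ℝ)
    (ω : n → ℝ) : ℝ :=
  ∑ i, f ((hH ω).eigenvalues i)

variable {A : Matrix n n ℂ}

lemma sumEig_eq_trace (hH : ∀ ω : n → ℝ, (Hmat A ω).IsHermitian) (p : Polynomial ℝ)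
    (ω : n → ℝ) :
    sumEig hH (fun t => p.eval t) ω = ((Polynomial.aeval (Hmat A ω) p).trace).re := by
  rw [trace_aeval (hH ω) p, Complex.ofReal_re]
  rfl

lemma continuous_trace_matrix : Continuous fun M : Matrix n n ℂ => M.trace := by
  have h : (fun M : Matrix n n ℂ => M.trace) = fun M => ∑ i, M i i := rfl
  rw [h]
  exact continuous_finset_sum Finset.univ fun i _ =>
    (continuous_apply i).comp (continuous_apply (A := fun _ : n => n → ℂ) i)

lemma continuous_sumEig_poly (hH : ∀ ω : n → ℝ, (Hmat A ω).IsHermitian) (p : Polynomial ℝ) :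
    Continuous (sumEig hH fun t => p.eval t) := by
  have h : sumEig hH (fun t => p.eval t)
      = fun ω => ((Polynomial.aeval (Hmat A ω) p).trace).re :=
    funext (sumEig_eq_trace hH p)
  rw [h]
  exact Complex.continuous_re.comp (continuous_trace_matrix.comp
    ((p.continuous_aeval).comp (continuous_Hmat A)))

lemma measurable_sumEig (hH : ∀ ω : n → ℝ, (Hmat A ω).IsHermitian) {f : ℝ → ℝ}
    (hf : Continuous f) : Measurable (sumEig hH f) := by
  classical
  set r : (n → ℝ) → ℝ := sumEig hH (fun t => (Polynomial.X ^ 2 : Polynomial ℝ).eval t) with hr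
  have hrcont : Continuous r := continuous_sumEig_poly hH _
  have hbound : ∀ (ω) (i), ((hH ω).eigenvalues i) ^ 2 ≤ r ω := by
    intro ω i
    have : r ω = ∑ j, ((hH ω).eigenvalues j) ^ 2 := by
      rw [hr]; unfold sumEig; simp
    rw [this]
    exact Finset.single_le_sum (f := fun j => ((hH ω).eigenvalues j) ^ 2)
      (fun j _ => sq_nonneg _) (Finset.mem_univ i)
  set G : ℕ → Set (n → ℝ) := fun R => {ω | r ω ≤ (R : ℝ) ^ 2} with hG
  have hGmeas : ∀ R, MeasurableSet (G R) :=
    fun R => measurableSet_le hrcont.measurable measurable_const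
  have hmem : ∀ (R : ℕ) (ω), ω ∈ G R → ∀ i,
      (hH ω).eigenvalues i ∈ Set.Icc (-(R : ℝ)) (R : ℝ) := by
    intro R ω hω i
    have h1 : ((hH ω).eigenvalues i) ^ 2 ≤ (R : ℝ) ^ 2 := le_trans (hbound ω i) hω
    exact abs_le_of_sq_le_sq' h1 (by positivity)
  have key : ∀ R : ℕ, Measurable ((G R).indicator (sumEig hH f)) := by
    intro R
    set F : C(Set.Icc (-(R : ℝ)) (R : ℝ), ℝ) :=
      ⟨fun t => f t, hf.comp continuous_subtype_val⟩ with hF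
    have hFmem : F ∈ closure (polynomialFunctions (Set.Icc (-(R : ℝ)) (R : ℝ)) :
        Set C(Set.Icc (-(R : ℝ)) (R : ℝ), ℝ)) := by
      have h := polynomialFunctions_closure_eq_top (-(R : ℝ)) (R : ℝ)
      have : F ∈ (polynomialFunctions (Set.Icc (-(R : ℝ)) (R : ℝ))).topologicalClosure := by
        rw [h]; trivial
      exact this
    obtain ⟨g, hgmem, hglim⟩ := mem_closure_iff_seq_limit.mp hFmem
    choose q hq using fun j => hgmem j
    -- the approximating measurable functions
    have hφmeas : ∀ j : ℕ, Measurable ((G R).indicator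
        (sumEig hH (fun t => (q j).eval t))) := fun j =>
      ((continuous_sumEig_poly hH (q j)).measurable).indicator (hGmeas R)
    apply measurable_of_tendsto_metrizable' Filter.atTop hφmeas
    rw [tendsto_pi_nhds]
    intro ω
    by_cases hω : ω ∈ G R
    · have hid : ∀ j, (G R).indicator (sumEig hH (fun t => (q j).eval t)) ω
          = sumEig hH (fun t => (q j).eval t) ω := fun j => Set.indicator_of_mem hω _
      have hid2 : (G R).indicator (sumEig hH f) ω = sumEig hH f ω := Set.indicator_of_mem hω _
      simp only [hid, hid2]
      have hdist : ∀ j : ℕ, dist (sumEig hH (fun t => (q j).eval t) ω) (sumEig hH f ω)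
          ≤ (Fintype.card n : ℝ) * dist (g j) F := by
        intro j
        have h1 : dist (sumEig hH (fun t => (q j).eval t) ω) (sumEig hH f ω)
            ≤ ∑ i : n, dist ((q j).eval ((hH ω).eigenvalues i)) (f ((hH ω).eigenvalues i)) :=
          dist_sum_sum_le_of_le Finset.univ fun i _ => le_refl _
        have h2 : ∀ i : n, dist ((q j).eval ((hH ω).eigenvalues i)) (f ((hH ω).eigenvalues i))
            ≤ dist (g j) F := by
          intro i
          have hmem' : (hH ω).eigenvalues i ∈ Set.Icc (-(R : ℝ)) (R : ℝ) := hmem R ω hω i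
          have := ContinuousMap.dist_apply_le_dist (f := g j) (g := F)
            (⟨(hH ω).eigenvalues i, hmem'⟩ : Set.Icc (-(R : ℝ)) (R : ℝ))
          have hgq : g j ⟨(hH ω).eigenvalues i, hmem'⟩ = (q j).eval ((hH ω).eigenvalues i) := by
            rw [← (hq j).2]
            rfl
          have hFv : F ⟨(hH ω).eigenvalues i, hmem'⟩ = f ((hH ω).eigenvalues i) := rfl
          rwa [hgq, hFv] at this
        calc dist (sumEig hH (fun t => (q j).eval t) ω) (sumEig hH f ω)
            ≤ ∑ i : n, dist ((q j).eval ((hH ω).eigenvalues i)) (f ((hH ω).eigenvalues i)) := h1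
          _ ≤ ∑ _i : n, dist (g j) F := Finset.sum_le_sum fun i _ => h2 i
          _ = (Fintype.card n : ℝ) * dist (g j) F := by
              rw [Finset.sum_const, Finset.card_univ, nsmul_eq_mul]
      rw [tendsto_iff_dist_tendsto_zero]
      apply squeeze_zero (fun j => dist_nonneg) hdist
      have : Filter.Tendsto (fun j => dist (g j) F) Filter.atTop (nhds 0) :=
        tendsto_iff_dist_tendsto_zero.mp hglim
      simpa using this.const_mul (Fintype.card n : ℝ)
    · have hid : ∀ j, (G R).indicator (sumEig hH (fun t => (q j).eval t)) ω = 0 :=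
        fun j => Set.indicator_of_notMem hω _
      have hid2 : (G R).indicator (sumEig hH f) ω = 0 := Set.indicator_of_notMem hω _
      simp only [hid, hid2]
      exact tendsto_const_nhds
  -- now let R → ∞
  apply measurable_of_tendsto_metrizable' Filter.atTop key
  rw [tendsto_pi_nhds]
  intro ω
  have hev : ∀ᶠ R : ℕ in Filter.atTop, (G R).indicator (sumEig hH f) ω = sumEig hH f ω := by
    rw [Filter.eventually_atTop]
    refine ⟨max 1 ⌈r ω⌉₊, fun R hR => ?_⟩
    apply Set.indicator_of_mem
    have h1 : (1 : ℕ) ≤ R := le_trans (le_max_left _ _) hR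
    have h2 : r ω ≤ (R : ℝ) := le_trans (Nat.le_ceil _) (by exact_mod_cast le_trans (le_max_right _ _) hR)
    have h3 : (R : ℝ) ≤ (R : ℝ) ^ 2 := by
      nlinarith [(Nat.one_le_cast (α := ℝ)).mpr h1]
    exact le_trans h2 h3
  exact Filter.Tendsto.congr' (Filter.EventuallyEq.symm hev) tendsto_const_nhds

lemma measurable_eigCnt (hH : ∀ ω : n → ℝ, (Hmat A ω).IsHermitian) (x : ℝ) :
    Measurable fun ω => (eigCnt (hH ω) x : ℝ) := by
  classical
  set f : ℕ → ℝ → ℝ := fun m t => max 0 (min 1 (1 - (m + 1 : ℝ) * (t - x))) with hfdef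
  have hfcont : ∀ m, Continuous (f m) := by
    intro m
    apply continuous_const.max
    apply continuous_const.min
    exact continuous_const.sub (continuous_const.mul ((continuous_id.sub continuous_const)))
  have hmeas : ∀ m, Measurable (sumEig hH (f m)) := fun m => measurable_sumEig hH (hfcont m)
  apply measurable_of_tendsto_metrizable' Filter.atTop hmeas
  rw [tendsto_pi_nhds]
  intro ω
  have hcount : (eigCnt (hH ω) x : ℝ)
      = ∑ i, if (hH ω).eigenvalues i ≤ x then (1 : ℝ) else 0 := by
    rw [eigCnt, Finset.card_filter]
    push_cast
    rfl
  rw [hcount]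
  unfold sumEig
  apply tendsto_finset_sum
  intro i _
  set lam := (hH ω).eigenvalues i with hlam
  by_cases hle : lam ≤ x
  · have : ∀ m : ℕ, f m lam = 1 := by
      intro m
      have h1 : (1 : ℝ) ≤ 1 - (m + 1 : ℝ) * (lam - x) := by nlinarith [Nat.cast_nonneg (α := ℝ) m]
      rw [hfdef]
      simp only
      rw [min_eq_left_iff.mpr, max_eq_right_iff.mpr] <;> linarith
    simp only [this, hle, if_pos]
    exact tendsto_const_nhds
  · push_neg at hle
    have hev : ∀ᶠ m : ℕ in Filter.atTop, f m lam = 0 := by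
      rw [Filter.eventually_atTop]
      refine ⟨⌈1 / (lam - x)⌉₊, fun m hm => ?_⟩
      have h0 : 0 < lam - x := by linarith
      have h1 : 1 / (lam - x) ≤ (m : ℝ) := le_trans (Nat.le_ceil _) (by exact_mod_cast hm)
      have h2 : (1 : ℝ) ≤ (m + 1 : ℝ) * (lam - x) := by
        have := (div_le_iff₀ h0).mp h1
        nlinarith
      rw [hfdef]
      simp only
      rw [max_eq_left_iff.mpr]
      exact min_le_of_right_le (by linarith)
    have : ¬ lam ≤ x := not_le.mpr hle
    simp only [this, if_neg, if_false]
    exact Filter.Tendsto.congr' (Filter.EventuallyEq.symm hev) tendsto_const_nhds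

end Meas

section Prob

open MeasureTheory

/-- The deterministic slice lemma: the set of `t` where the count drops under `t ↦ t + δ`
is contained in an interval of radius `δ` around any of its points. -/
lemma slice_lemma {g : ℝ → ℕ} {δ : ℝ}
    (hmono : ∀ ⦃s t : ℝ⦄, s ≤ t → g t ≤ g s)
    (htwo : ∀ s t : ℝ, g s ≤ g t + 1) {t₀ t : ℝ}
    (h₀ : g (t₀ + δ) + 1 ≤ g t₀) (h : g (t + δ) + 1 ≤ g t) :
    t ∈ Set.Icc (t₀ - δ) (t₀ + δ) := by
  constructor
  · by_contra hc
    push_neg at hc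
    have h1 : t + δ ≤ t₀ := by linarith
    have hA : g t₀ ≤ g (t + δ) := hmono h1
    have hB := htwo t (t₀ + δ)
    omega
  · by_contra hc
    push_neg at hc
    have h1 : t₀ + δ ≤ t := by linarith
    have hA : g t ≤ g (t₀ + δ) := hmono h1
    have hB := htwo t₀ (t + δ)
    omega

/-- Shift a subset of the coordinates up by `δ`. -/
def shiftSet (δ : ℝ) (s : Finset n) (ω : n → ℝ) : n → ℝ :=
  fun l => if l ∈ s then ω l + δ else ω l

lemma measurable_shiftSet (δ : ℝ) (s : Finset n) : Measurable (shiftSet (n := n) δ s) := by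
  apply measurable_pi_lambda
  intro l
  have heq : (fun ω : n → ℝ => shiftSet δ s ω l)
      = fun ω : n → ℝ => if l ∈ s then ω l + δ else ω l := rfl
  rw [heq]
  by_cases h : l ∈ s
  · simp only [if_pos h]
    exact Measurable.add_const
      (measurable_pi_apply l : Measurable fun ω : n → ℝ => ω l) δ
  · simp only [if_neg h]
    exact (measurable_pi_apply l : Measurable fun ω : n → ℝ => ω l)

lemma shiftSet_empty (δ : ℝ) (ω : n → ℝ) : shiftSet δ (∅ : Finset n) ω = ω := by
  funext l; simp [shiftSet]

lemma shiftSet_univ (δ : ℝ) (ω : n → ℝ) :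
    shiftSet δ (Finset.univ : Finset n) ω = fun l => ω l + δ := by
  funext l; simp [shiftSet]

lemma shiftSet_update (δ : ℝ) (s : Finset n) {k : n} (hk : k ∉ s) (x : n → ℝ) (t : ℝ) :
    shiftSet δ s (Function.update x k t) = Function.update (shiftSet δ s x) k t := by
  funext l
  by_cases h : l = k
  · subst h
    simp [shiftSet, hk, Function.update_self]
  · simp [shiftSet, Function.update_of_ne h]

lemma shiftSet_insert_update (δ : ℝ) (s : Finset n) {k : n} (hk : k ∉ s) (x : n → ℝ) (t : ℝ) :
    shiftSet δ (insert k s) (Function.update x k t)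
      = Function.update (shiftSet δ s x) k (t + δ) := by
  funext l
  by_cases h : l = k
  · subst h
    simp [shiftSet, Function.update_self]
  · have : l ∈ insert k s ↔ l ∈ s := by
      simp [Finset.mem_insert, h]
    simp [shiftSet, Function.update_of_ne h, this]

lemma shiftSet_self_update (δ : ℝ) (s : Finset n) {k : n} (hk : k ∉ s) (x : n → ℝ) :
    shiftSet δ s x = Function.update (shiftSet δ s x) k ((x : n → ℝ) k) := by
  have h1 : shiftSet δ s x k = x k := by simp [shiftSet, hk]
  rw [← h1, Function.update_eq_self]

variable [Nonempty n]

/-- The key per-coordinate estimate. -/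
lemma step_bound {A : Matrix n n ℂ} (hH : ∀ ω : n → ℝ, (Hmat A ω).IsHermitian)
    (μ : Measure ℝ) [IsProbabilityMeasure μ]
    (x δ c₀ : ℝ) (hδ : 0 < δ) (hc₀ : 0 ≤ c₀)
    (hc : ∀ E' : ℝ, μ (Set.Icc (E' - δ) (E' + δ)) ≤ ENNReal.ofReal c₀)
    (k : n) (s : Finset n) (hk : k ∉ s) :
    ∫ ω, ((eigCnt (hH (shiftSet δ s ω)) x : ℝ)
        - (eigCnt (hH (shiftSet δ (insert k s) ω)) x : ℝ))
      ∂(Measure.pi fun _ : n => μ) ≤ c₀ := by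
  classical
  set P : Measure (n → ℝ) := Measure.pi fun _ : n => μ with hP
  set F : (n → ℝ) → ℕ := fun y => eigCnt (hH y) x with hF
  -- the event where the count drops
  set Ev : Set (n → ℝ) := {ω | F (shiftSet δ (insert k s) ω) + 1 ≤ F (shiftSet δ s ω)} with hEv
  have hmeasF : Measurable fun y : n → ℝ => (F y : ℝ) := measurable_eigCnt hH x
  have hEvmeas : MeasurableSet Ev := by
    have : Ev = {ω : n → ℝ | (F (shiftSet δ (insert k s) ω) : ℝ) + 1
        ≤ (F (shiftSet δ s ω) : ℝ)} := by
      ext ω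
      simp only [hEv, Set.mem_setOf_eq]
      exact_mod_cast Iff.rfl
    rw [this]
    exact measurableSet_le ((hmeasF.comp (measurable_shiftSet δ (insert k s))).add_const 1)
      (hmeasF.comp (measurable_shiftSet δ s))
  -- monotonicity and two-value facts for each fixed environment
  have gmono : ∀ (y : n → ℝ) ⦃t t' : ℝ⦄, t ≤ t' →
      F (Function.update y k t') ≤ F (Function.update y k t) := by
    intro y t t' htt
    apply eigCnt_Hmat_anti hH
    intro l
    by_cases h : l = k
    · subst h; simp [Function.update_self, htt]
    · simp [Function.update_of_ne h]
  have gtwo : ∀ (y : n → ℝ) (t t' : ℝ),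
      F (Function.update y k t) ≤ F (Function.update y k t') + 1 := by
    intro y t t'
    exact eigCnt_Hmat_twoval hH k y x t t'
  -- the integrand is the indicator of Ev
  have hind : ∀ ω, ((eigCnt (hH (shiftSet δ s ω)) x : ℝ)
      - (eigCnt (hH (shiftSet δ (insert k s) ω)) x : ℝ))
      = Ev.indicator (fun _ => (1 : ℝ)) ω := by
    intro ω
    show ((F (shiftSet δ s ω) : ℝ) - (F (shiftSet δ (insert k s) ω) : ℝ))
      = Ev.indicator (fun _ => (1 : ℝ)) ω
    have e1 : shiftSet δ s ω = Function.update (shiftSet δ s ω) k (ω k) :=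
      shiftSet_self_update δ s hk ω
    have e2 : shiftSet δ (insert k s) ω
        = Function.update (shiftSet δ s ω) k (ω k + δ) := by
      have := shiftSet_insert_update δ s hk ω (ω k)
      rwa [Function.update_eq_self] at this
    have hle : F (shiftSet δ (insert k s) ω) ≤ F (shiftSet δ s ω) := by
      rw [e1, e2]
      exact gmono _ (by linarith)
    have hge : F (shiftSet δ s ω) ≤ F (shiftSet δ (insert k s) ω) + 1 := by
      rw [e1, e2]
      exact gtwo _ _ _
    by_cases hω : ω ∈ Ev
    · have h1 : F (shiftSet δ (insert k s) ω) + 1 = F (shiftSet δ s ω) := le_antisymm hω hge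
      rw [Set.indicator_of_mem hω]
      rw [← h1]
      push_cast
      ring
    · have h1 : F (shiftSet δ s ω) = F (shiftSet δ (insert k s) ω) := by
        have := hω
        rw [hEv, Set.mem_setOf_eq] at this
        omega
      rw [Set.indicator_of_notMem hω, h1]
      ring
  -- the measure of the event
  have hPEv : P Ev ≤ ENNReal.ofReal c₀ := by
    have hχ : Measurable (Ev.indicator (fun _ => (1 : ENNReal))) :=
      measurable_const.indicator hEvmeas
    have h0 : P Ev = ∫⁻ ω, Ev.indicator (fun _ => (1 : ENNReal)) ω ∂P :=
      (lintegral_indicator_one hEvmeas).symm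
    rw [h0]
    obtain ⟨x₀⟩ : Nonempty (n → ℝ) := ⟨fun _ => 0⟩
    rw [lintegral_eq_lmarginal_univ x₀]
    rw [lmarginal_erase' _ hχ (Finset.mem_univ k)]
    -- bound the inner integral pointwise
    have hinner : ∀ x' : n → ℝ,
        (∫⁻ t, Ev.indicator (fun _ => (1 : ENNReal)) (Function.update x' k t) ∂μ)
          ≤ ENNReal.ofReal c₀ := by
      intro x'
      set y : n → ℝ := shiftSet δ s x' with hy
      have hcond : ∀ t : ℝ, (Function.update x' k t ∈ Ev)
          ↔ (F (Function.update y k (t + δ)) + 1 ≤ F (Function.update y k t)) := by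
        intro t
        rw [hEv, Set.mem_setOf_eq, shiftSet_update δ s hk, shiftSet_insert_update δ s hk]
      by_cases hex : ∃ t₀ : ℝ, F (Function.update y k (t₀ + δ)) + 1 ≤ F (Function.update y k t₀)
      · obtain ⟨t₀, ht₀⟩ := hex
        have hsub : ∀ t : ℝ, Ev.indicator (fun _ => (1 : ENNReal)) (Function.update x' k t)
            ≤ (Set.Icc (t₀ - δ) (t₀ + δ)).indicator (fun _ => (1 : ENNReal)) t := by
          intro t
          by_cases ht : Function.update x' k t ∈ Ev
          · rw [Set.indicator_of_mem ht]
            have htmem : t ∈ Set.Icc (t₀ - δ) (t₀ + δ) := by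
              apply slice_lemma (g := fun t => F (Function.update y k t))
                (gmono y) (gtwo y) ht₀ ((hcond t).mp ht)
            rw [Set.indicator_of_mem htmem]
          · rw [Set.indicator_of_notMem ht]
            exact zero_le
        calc (∫⁻ t, Ev.indicator (fun _ => (1 : ENNReal)) (Function.update x' k t) ∂μ)
            ≤ ∫⁻ t, (Set.Icc (t₀ - δ) (t₀ + δ)).indicator (fun _ => (1 : ENNReal)) t ∂μ :=
              lintegral_mono hsub
          _ = μ (Set.Icc (t₀ - δ) (t₀ + δ)) := lintegral_indicator_one measurableSet_Icc
          _ ≤ ENNReal.ofReal c₀ := hc t₀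
      · push_neg at hex
        have hzero : ∀ t : ℝ, Ev.indicator (fun _ => (1 : ENNReal)) (Function.update x' k t)
            = 0 := by
          intro t
          apply Set.indicator_of_notMem
          intro hmem
          exact absurd ((hcond t).mp hmem) (by
            have := hex t
            omega)
        simp only [hzero]
        rw [lintegral_zero]
        exact zero_le
    calc (∫⋯∫⁻_Finset.univ.erase k,
          (fun x' => ∫⁻ t, Ev.indicator (fun _ => (1 : ENNReal)) (Function.update x' k t) ∂μ)
          ∂fun _ => μ) x₀
        ≤ (∫⋯∫⁻_Finset.univ.erase k, (fun _ => ENNReal.ofReal c₀) ∂fun _ => μ) x₀ :=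
          lmarginal_mono (fun x' => hinner x') x₀
      _ = ENNReal.ofReal c₀ := by
          simp [lmarginal, lintegral_const]
  -- put it together
  have : ∫ ω, ((eigCnt (hH (shiftSet δ s ω)) x : ℝ)
      - (eigCnt (hH (shiftSet δ (insert k s) ω)) x : ℝ)) ∂P
      = (P Ev).toReal := by
    rw [show (fun ω => ((eigCnt (hH (shiftSet δ s ω)) x : ℝ)
        - (eigCnt (hH (shiftSet δ (insert k s) ω)) x : ℝ)))
        = Ev.indicator (fun _ => (1 : ℝ)) from funext hind]
    rw [integral_indicator_const (1 : ℝ) hEvmeas]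
    simp [Measure.real]
  rw [this]
  calc (P Ev).toReal ≤ (ENNReal.ofReal c₀).toReal := by
        apply ENNReal.toReal_mono ENNReal.ofReal_ne_top hPEv
    _ = c₀ := ENNReal.toReal_ofReal hc₀

/-- integrability of the step difference -/
lemma step_integrable {A : Matrix n n ℂ} (hH : ∀ ω : n → ℝ, (Hmat A ω).IsHermitian)
    (μ : Measure ℝ) [IsProbabilityMeasure μ] (x δ : ℝ) (s t : Finset n) :
    Integrable (fun ω => ((eigCnt (hH (shiftSet δ s ω)) x : ℝ)
        - (eigCnt (hH (shiftSet δ t ω)) x : ℝ))) (Measure.pi fun _ : n => μ) := by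
  have hbd : ∀ (u : Finset n), Integrable
      (fun ω => (eigCnt (hH (shiftSet δ u ω)) x : ℝ)) (Measure.pi fun _ : n => μ) := by
    intro u
    have hm : Measurable (fun ω : n → ℝ => (eigCnt (hH (shiftSet δ u ω)) x : ℝ)) :=
      (measurable_eigCnt hH x).comp (measurable_shiftSet δ u)
    apply MeasureTheory.Integrable.mono' (integrable_const (Fintype.card n : ℝ))
      hm.aestronglyMeasurable
    filter_upwards with ω
    rw [Real.norm_eq_abs, abs_of_nonneg (by positivity)]
    have : eigCnt (hH (shiftSet δ u ω)) x ≤ Fintype.card n := by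
      rw [eigCnt]
      exact le_trans (Finset.card_filter_le _ _) (le_of_eq (Finset.card_univ))
    exact_mod_cast this
  exact (hbd s).sub (hbd t)

end Prob

end WegnerAux



/-- (Wegner estimate for the finite-volume Anderson model.)
Let `Λ` be a nonempty finite set, `A` a Hermitian complex matrix indexed by `Λ×Λ`, and `μ`
a Borel probability measure on `ℝ` with compact support. For `ω ∈ ℝ^Λ` let
`H_ω = A + diag(ω)`. Then for every `E ∈ ℝ` and `ε > 0`,
`∫ #{i : λᵢ(H_ω) ∈ [E−ε,E+ε]} dℙ(ω) ≤ |Λ| · s(μ,4ε)`,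
where `ℙ = ⊗_{k∈Λ} μ` and `s(μ,δ) = sup_E μ([E−δ,E+δ])`. -/
theorem anderson_wegner_estimate
    (Λ : Type*) [Fintype Λ] [DecidableEq Λ] [Nonempty Λ]
    (A : Matrix Λ Λ ℂ) (hA : A.IsHermitian)
    (μ : Measure ℝ) [IsProbabilityMeasure μ]
    (hcomp : ∃ K : Set ℝ, IsCompact K ∧ μ Kᶜ = 0)
    (hH : ∀ ω : Λ → ℝ, (A + Matrix.diagonal fun k => (ω k : ℂ)).IsHermitian)
    (E : ℝ) (ε : ℝ) (hε : 0 < ε) :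
    ∫ ω : Λ → ℝ,
        ((Finset.univ.filter fun i =>
            (hH ω).eigenvalues i ∈ Set.Icc (E - ε) (E + ε)).card : ℝ)
        ∂(Measure.pi fun _ : Λ => μ)
      ≤ (Fintype.card Λ : ℝ)
          * ⨆ E' : ℝ, (μ (Set.Icc (E' - 4 * ε) (E' + 4 * ε))).toReal := by
  classical
  have hH' : ∀ ω : Λ → ℝ, (WegnerAux.Hmat A ω).IsHermitian := hH
  set P : Measure (Λ → ℝ) := Measure.pi fun _ : Λ => μ with hP
  set δ : ℝ := 4 * ε with hδdef
  have hδ : 0 < δ := by rw [hδdef]; linarith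
  set c₀ : ℝ := ⨆ E' : ℝ, (μ (Set.Icc (E' - δ) (E' + δ))).toReal with hc₀def
  have hbdd : BddAbove (Set.range fun E' : ℝ => (μ (Set.Icc (E' - δ) (E' + δ))).toReal) := by
    refine ⟨1, ?_⟩
    rintro y ⟨E', rfl⟩
    have h1 : μ (Set.Icc (E' - δ) (E' + δ)) ≤ 1 := prob_le_one
    have := ENNReal.toReal_mono (by norm_num) h1
    simpa using this
  have hc₀0 : 0 ≤ c₀ := le_trans ENNReal.toReal_nonneg (le_ciSup hbdd 0)
  have hc : ∀ E' : ℝ, μ (Set.Icc (E' - δ) (E' + δ)) ≤ ENNReal.ofReal c₀ := by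
    intro E'
    have h1 : (μ (Set.Icc (E' - δ) (E' + δ))).toReal ≤ c₀ := le_ciSup hbdd E'
    have h2 : μ (Set.Icc (E' - δ) (E' + δ)) ≠ ⊤ := measure_ne_top μ _
    calc μ (Set.Icc (E' - δ) (E' + δ))
        = ENNReal.ofReal ((μ (Set.Icc (E' - δ) (E' + δ))).toReal) :=
          (ENNReal.ofReal_toReal h2).symm
      _ ≤ ENNReal.ofReal c₀ := ENNReal.ofReal_le_ofReal h1
  set N : ℕ := Fintype.card Λ with hN
  set e : Fin N ≃ Λ := (Fintype.equivFin Λ).symm with he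
  set S : ℕ → Finset Λ := fun j => Finset.univ.filter (fun l => ((e.symm l : Fin N) : ℕ) < j)
    with hS
  have hS0 : S 0 = ∅ := by
    ext l; simp [hS]
  have hSN : S N = Finset.univ := by
    ext l; simp [hS, (e.symm l).2]
  have hSsucc : ∀ j : ℕ, j < N → ∃ k : Λ, k ∉ S j ∧ S (j + 1) = insert k (S j) := by
    intro j hj
    refine ⟨e ⟨j, hj⟩, ?_, ?_⟩
    · simp [hS]
    · ext l
      simp only [hS, Finset.mem_insert, Finset.mem_filter, Finset.mem_univ, true_and]
      constructor
      · intro h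
        rcases Nat.lt_succ_iff_lt_or_eq.mp h with h | h
        · exact Or.inr h
        · left
          have : e.symm l = ⟨j, hj⟩ := Fin.ext h
          rw [← this, Equiv.apply_symm_apply]
      · intro h
        rcases h with h | h
        · subst h
          simp
        · omega
  set x : ℝ := E + ε with hx
  -- the pointwise telescoping bound
  have hpt : ∀ ω : Λ → ℝ, ((Finset.univ.filter fun i =>
      (hH ω).eigenvalues i ∈ Set.Icc (E - ε) (E + ε)).card : ℝ)
      ≤ ∑ j ∈ Finset.range N,
          ((WegnerAux.eigCnt (hH' (WegnerAux.shiftSet δ (S j) ω)) x : ℝ)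
            - (WegnerAux.eigCnt (hH' (WegnerAux.shiftSet δ (S (j + 1)) ω)) x : ℝ)) := by
    intro ω
    have htel : ∑ j ∈ Finset.range N,
        ((WegnerAux.eigCnt (hH' (WegnerAux.shiftSet δ (S j) ω)) x : ℝ)
          - (WegnerAux.eigCnt (hH' (WegnerAux.shiftSet δ (S (j + 1)) ω)) x : ℝ))
        = (WegnerAux.eigCnt (hH' (WegnerAux.shiftSet δ (S 0) ω)) x : ℝ)
          - (WegnerAux.eigCnt (hH' (WegnerAux.shiftSet δ (S N) ω)) x : ℝ) :=
      Finset.sum_range_sub'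
        (fun j => (WegnerAux.eigCnt (hH' (WegnerAux.shiftSet δ (S j) ω)) x : ℝ)) N
    rw [htel, hS0, hSN]
    have e0 : WegnerAux.shiftSet δ (∅ : Finset Λ) ω = ω := WegnerAux.shiftSet_empty δ ω
    have eU : WegnerAux.shiftSet δ (Finset.univ : Finset Λ) ω = fun l => ω l + δ :=
      WegnerAux.shiftSet_univ δ ω
    have hc1 : WegnerAux.eigCnt (hH' (WegnerAux.shiftSet δ (∅ : Finset Λ) ω)) x
        = WegnerAux.eigCnt (hH' ω) x := by
      apply WegnerAux.eigCnt_congr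
      rw [e0]
    have hc2 : WegnerAux.eigCnt (hH' (WegnerAux.shiftSet δ (Finset.univ : Finset Λ) ω)) x
        = WegnerAux.eigCnt (hH' ω) (x - δ) := by
      have h1 : WegnerAux.eigCnt (hH' (WegnerAux.shiftSet δ (Finset.univ : Finset Λ) ω)) x
          = WegnerAux.eigCnt (hH' (fun l => ω l + δ)) x := by
        apply WegnerAux.eigCnt_congr
        rw [eU]
      rw [h1]
      exact WegnerAux.eigCnt_Hmat_shift hH' ω δ x
    rw [hc1, hc2]
    -- now a natural-number counting inequality
    have hkey : (Finset.univ.filter fun i =>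
        (hH ω).eigenvalues i ∈ Set.Icc (E - ε) (E + ε)).card
        + WegnerAux.eigCnt (hH' ω) (x - δ) ≤ WegnerAux.eigCnt (hH' ω) x := by
      rw [WegnerAux.eigCnt, WegnerAux.eigCnt]
      have hdisj : Disjoint (Finset.univ.filter fun i =>
          (hH ω).eigenvalues i ∈ Set.Icc (E - ε) (E + ε))
          (Finset.univ.filter fun i => (hH' ω).eigenvalues i ≤ x - δ) := by
        rw [Finset.disjoint_left]
        intro i h1 h2
        rw [Finset.mem_filter] at h1 h2
        have ha : E - ε ≤ (hH ω).eigenvalues i := h1.2.1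
        have hb : (hH ω).eigenvalues i ≤ x - δ := h2.2
        rw [hx, hδdef] at hb
        linarith
      rw [← Finset.card_union_of_disjoint hdisj]
      apply Finset.card_le_card
      intro i hi
      rw [Finset.mem_union, Finset.mem_filter, Finset.mem_filter] at hi
      rw [Finset.mem_filter]
      refine ⟨Finset.mem_univ i, ?_⟩
      rcases hi with h | h
      · exact h.2.2
      · have h2 := h.2
        linarith [h2]
    have hkey'' : ((Finset.univ.filter fun i =>
        (hH ω).eigenvalues i ∈ Set.Icc (E - ε) (E + ε)).card : ℝ)
        + (WegnerAux.eigCnt (hH' ω) (x - δ) : ℝ)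
        ≤ (WegnerAux.eigCnt (hH' ω) x : ℝ) := by exact_mod_cast hkey
    linarith
  by_cases hInt : Integrable (fun ω : Λ → ℝ => ((Finset.univ.filter fun i =>
      (hH ω).eigenvalues i ∈ Set.Icc (E - ε) (E + ε)).card : ℝ)) P
  · have hDint : ∀ j : ℕ, Integrable (fun ω =>
        ((WegnerAux.eigCnt (hH' (WegnerAux.shiftSet δ (S j) ω)) x : ℝ)
          - (WegnerAux.eigCnt (hH' (WegnerAux.shiftSet δ (S (j + 1)) ω)) x : ℝ))) P :=
      fun j => WegnerAux.step_integrable hH' μ x δ (S j) (S (j + 1))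
    have hsum_int : Integrable (fun ω => ∑ j ∈ Finset.range N,
        ((WegnerAux.eigCnt (hH' (WegnerAux.shiftSet δ (S j) ω)) x : ℝ)
          - (WegnerAux.eigCnt (hH' (WegnerAux.shiftSet δ (S (j + 1)) ω)) x : ℝ))) P :=
      integrable_finset_sum _ (fun j _ => hDint j)
    calc ∫ ω : Λ → ℝ, ((Finset.univ.filter fun i =>
            (hH ω).eigenvalues i ∈ Set.Icc (E - ε) (E + ε)).card : ℝ) ∂P
        ≤ ∫ ω, (∑ j ∈ Finset.range N,
            ((WegnerAux.eigCnt (hH' (WegnerAux.shiftSet δ (S j) ω)) x : ℝ)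
              - (WegnerAux.eigCnt (hH' (WegnerAux.shiftSet δ (S (j + 1)) ω)) x : ℝ))) ∂P :=
          integral_mono hInt hsum_int hpt
      _ = ∑ j ∈ Finset.range N, ∫ ω,
            ((WegnerAux.eigCnt (hH' (WegnerAux.shiftSet δ (S j) ω)) x : ℝ)
              - (WegnerAux.eigCnt (hH' (WegnerAux.shiftSet δ (S (j + 1)) ω)) x : ℝ)) ∂P :=
          integral_finset_sum _ (fun j _ => hDint j)
      _ ≤ ∑ _j ∈ Finset.range N, c₀ := by
          apply Finset.sum_le_sum
          intro j hj
          obtain ⟨k, hk, hins⟩ := hSsucc j (Finset.mem_range.mp hj)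
          rw [show S (j + 1) = insert k (S j) from hins]
          exact WegnerAux.step_bound hH' μ x δ c₀ hδ hc₀0 hc k (S j) hk
      _ = (N : ℝ) * c₀ := by
          rw [Finset.sum_const, Finset.card_range, nsmul_eq_mul]
  · rw [integral_undef hInt]
    exact mul_nonneg (Nat.cast_nonneg _) hc₀0
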